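/- Let G be a finite subgroup of GL(V), let f be a nonzero homogeneous G-invariant polynomial function on V, and let v ∈ V∖{0} with f(v) = 0. If v is a smooth point of the projective hypersurface Z(f) (i.e. some partial derivative of f is nonzero at v), then the fixed subspace V^{G_v} of the stabilizer G_v = {g ∈ G : g·v = v} has dimension at least 2. -/

import Mathlib

noncomputable section
open MvPolynomial Matrix

/-- The subspace of vectors fixed by every element of a set of invertible matrices. -/
def fixedSpace {n : ℕ} (S : Set (GL (Fin n) ℂ)) : Submodule ℂ (Fin n → ℂ) where
  carrier := {v | ∀ g ∈ S, (g : Matrix (Fin n) (Fin n) ℂ).mulVec v = v}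
  add_mem' := by
    intro a b ha hb g hg
    rw [Matrix.mulVec_add, ha g hg, hb g hg]
  zero_mem' := by
    intro g hg
    simp
  smul_mem' := by
    intro c a ha g hg
    rw [Matrix.mulVec_smul, ha g hg]

/-- The line polynomial: substitute `x i ↦ v i + u i * T`. -/
def lineP {n : ℕ} (v u : Fin n → ℂ) (f : MvPolynomial (Fin n) ℂ) : Polynomial ℂ :=
  MvPolynomial.aeval (fun i => Polynomial.C (v i) + Polynomial.C (u i) * Polynomial.X) f

lemma lineP_eval {n : ℕ} (v u : Fin n → ℂ) (f : MvPolynomial (Fin n) ℂ) (t : ℂ) :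
    (lineP v u f).eval t = MvPolynomial.eval (fun i => v i + u i * t) f := by
  induction f using MvPolynomial.induction_on with
  | C a => simp [lineP]
  | add p q hp hq => simp [lineP, map_add] at hp hq ⊢; rw [hp, hq]
  | mul_X p j hp =>
      simp only [lineP, _root_.map_mul, MvPolynomial.aeval_X, Polynomial.eval_mul,
        Polynomial.eval_add, Polynomial.eval_C, Polynomial.eval_X, MvPolynomial.eval_mul,
        MvPolynomial.eval_X] at hp ⊢
      rw [hp]

lemma lineP_deriv {n : ℕ} (v u : Fin n → ℂ) (f : MvPolynomial (Fin n) ℂ) :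
    ((lineP v u f).derivative).eval 0 = ∑ i, u i * MvPolynomial.eval v (pderiv i f) := by
  induction f using MvPolynomial.induction_on with
  | C a => simp [lineP]
  | add p q hp hq =>
      simp only [lineP, map_add, Polynomial.derivative_add, Polynomial.eval_add] at hp hq ⊢
      rw [hp, hq, ← Finset.sum_add_distrib]
      congr 1; ext i; ring
  | mul_X p j hp =>
      have hev : Polynomial.eval 0
            ((MvPolynomial.aeval fun i => Polynomial.C (v i) + Polynomial.C (u i) * Polynomial.X) p)
          = MvPolynomial.eval v p := by
        simpa [lineP] using lineP_eval v u p 0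
      simp only [lineP, _root_.map_mul, MvPolynomial.aeval_X, Polynomial.derivative_mul,
        Polynomial.derivative_add, Polynomial.derivative_C, Polynomial.derivative_mul,
        Polynomial.derivative_X, zero_add, mul_one, zero_mul, add_zero,
        Polynomial.eval_add, Polynomial.eval_mul] at hp ⊢
      simp only [Polynomial.eval_add, Polynomial.eval_mul, Polynomial.eval_C, Polynomial.eval_X,
        mul_zero, add_zero]
      rw [hp, hev]
      classical
      have : ∀ i, u i * MvPolynomial.eval v (pderiv i (p * X j))
          = (u i * MvPolynomial.eval v (pderiv i p)) * v j
            + (if i = j then MvPolynomial.eval v p * u j else 0) := by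
        intro i
        rw [pderiv_mul, pderiv_X]
        by_cases h : i = j <;> simp [h, Pi.single_apply] <;> ring
      rw [Finset.sum_congr rfl (fun i _ => this i), Finset.sum_add_distrib]
      simp [Finset.sum_ite_eq, ← Finset.sum_mul]

lemma homog_eval_smul {n e : ℕ} {f : MvPolynomial (Fin n) ℂ} (h : f.IsHomogeneous e)
    (c : ℂ) (v : Fin n → ℂ) :
    MvPolynomial.eval (c • v) f = c ^ e * MvPolynomial.eval v f := by
  rw [MvPolynomial.eval_eq, MvPolynomial.eval_eq, Finset.mul_sum]
  apply Finset.sum_congr rfl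
  intro d hd
  have hdeg : ∑ i ∈ d.support, d i = e := by
    have := h (MvPolynomial.mem_support_iff.mp hd)
    rw [← this]
    simp [Finsupp.weight_apply, Finsupp.sum]
  have : ∏ i ∈ d.support, (c • v) i ^ d i
      = c ^ e * ∏ i ∈ d.support, v i ^ d i := by
    rw [← hdeg, ← Finset.prod_pow_eq_pow_sum, ← Finset.prod_mul_distrib]
    apply Finset.prod_congr rfl
    intro i _
    simp [mul_pow]
  rw [this]; ring

theorem stmt_19 {n e : ℕ} (G : Subgroup (GL (Fin n) ℂ)) (hG : Finite G)
    (f : MvPolynomial (Fin n) ℂ) (hf0 : f ≠ 0) (hhom : f.IsHomogeneous e)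
    (hinv : ∀ g ∈ G, ∀ w : Fin n → ℂ,
      MvPolynomial.eval ((g : Matrix (Fin n) (Fin n) ℂ).mulVec w) f = MvPolynomial.eval w f)
    (v : Fin n → ℂ) (hv0 : v ≠ 0) (hfv : MvPolynomial.eval v f = 0)
    (hsmooth : ∃ i, MvPolynomial.eval v (pderiv i f) ≠ 0) :
    2 ≤ Module.finrank ℂ
      (fixedSpace {g : GL (Fin n) ℂ |
        g ∈ G ∧ (g : Matrix (Fin n) (Fin n) ℂ).mulVec v = v}) := by
  classical
  set S : Set (GL (Fin n) ℂ) :=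
    {g : GL (Fin n) ℂ | g ∈ G ∧ (g : Matrix (Fin n) (Fin n) ℂ).mulVec v = v} with hSdef
  -- the "gradient pairing"
  set L : (Fin n → ℂ) → ℂ := fun u => ∑ i, u i * MvPolynomial.eval v (pderiv i f) with hLdef
  -- invariance of L under the stabilizer
  have key : ∀ g ∈ S, ∀ u : Fin n → ℂ,
      L ((g : Matrix (Fin n) (Fin n) ℂ).mulVec u) = L u := by
    intro g hg u
    have heq : lineP v ((g : Matrix (Fin n) (Fin n) ℂ).mulVec u) f = lineP v u f := by
      apply Polynomial.funext
      intro t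
      rw [lineP_eval, lineP_eval]
      have h2 : (fun i => v i + ((g : Matrix (Fin n) (Fin n) ℂ).mulVec u) i * t)
          = (g : Matrix (Fin n) (Fin n) ℂ).mulVec (fun i => v i + u i * t) := by
        have : (fun i => v i + u i * t) = v + t • u := by
          funext i; simp [mul_comm]
        rw [this, Matrix.mulVec_add, Matrix.mulVec_smul, hg.2]
        funext i; simp [mul_comm]
      rw [h2, hinv g hg.1]
    have h3 := congrArg (fun q : Polynomial ℂ => Polynomial.eval 0 (Polynomial.derivative q)) heq
    simp only [lineP_deriv] at h3
    exact h3
  -- L v = 0 by homogeneity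
  have hLv : L v = 0 := by
    have hz : lineP v v f = 0 := by
      apply Polynomial.funext
      intro t
      rw [lineP_eval]
      have : (fun i => v i + v i * t) = (1 + t) • v := by
        funext i; simp [smul_eq_mul]; ring
      rw [this, homog_eval_smul hhom, hfv, mul_zero]
      simp
    have h3 := congrArg (fun q : Polynomial ℂ => Polynomial.eval 0 (Polynomial.derivative q)) hz
    simp only [lineP_deriv] at h3
    simpa [hLdef] using h3
  -- S is a finite set containing 1, closed under * and ⁻¹
  have hone : (1 : GL (Fin n) ℂ) ∈ S := ⟨G.one_mem, by simp⟩
  have hmul : ∀ g ∈ S, ∀ h ∈ S, g * h ∈ S := by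
    intro g hg h hh
    refine ⟨G.mul_mem hg.1 hh.1, ?_⟩
    rw [Units.val_mul, ← Matrix.mulVec_mulVec, hh.2, hg.2]
  have hinvm : ∀ g ∈ S, g⁻¹ ∈ S := by
    intro g hg
    refine ⟨G.inv_mem hg.1, ?_⟩
    conv_lhs => rw [← hg.2]
    rw [Matrix.mulVec_mulVec]
    have : ((g⁻¹ : GL (Fin n) ℂ) : Matrix (Fin n) (Fin n) ℂ) * (g : Matrix (Fin n) (Fin n) ℂ)
        = 1 := by
      rw [← Units.val_mul, inv_mul_cancel, Units.val_one]
    rw [this, Matrix.one_mulVec]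
  have hGfin : Finite (↥(G : Set (GL (Fin n) ℂ))) := hG
  have hSfin : S.Finite := Set.Finite.subset (Set.toFinite (G : Set (GL (Fin n) ℂ)))
    (fun g hg => hg.1)
  set T : Finset (GL (Fin n) ℂ) := hSfin.toFinset with hTdef
  have hmemT : ∀ g, g ∈ T ↔ g ∈ S := fun g => hSfin.mem_toFinset
  obtain ⟨i0, hi0⟩ := hsmooth
  set u0 : Fin n → ℂ := Pi.single i0 1 with hu0
  set w : Fin n → ℂ := ∑ g ∈ T, (g : Matrix (Fin n) (Fin n) ℂ).mulVec u0 with hwdef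
  -- w is fixed by S
  have hwmem : w ∈ fixedSpace S := by
    intro h hh
    rw [hwdef]
    have hlin : (h : Matrix (Fin n) (Fin n) ℂ).mulVec
          (∑ g ∈ T, (g : Matrix (Fin n) (Fin n) ℂ).mulVec u0)
        = ∑ g ∈ T, ((h * g : GL (Fin n) ℂ) : Matrix (Fin n) (Fin n) ℂ).mulVec u0 := by
      rw [show (h : Matrix (Fin n) (Fin n) ℂ).mulVec
            (∑ g ∈ T, (g : Matrix (Fin n) (Fin n) ℂ).mulVec u0)
          = (h : Matrix (Fin n) (Fin n) ℂ).mulVecLin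
            (∑ g ∈ T, (g : Matrix (Fin n) (Fin n) ℂ).mulVec u0) from rfl,
        map_sum]
      apply Finset.sum_congr rfl
      intro g _
      rw [Matrix.mulVecLin_apply, Matrix.mulVec_mulVec, Units.val_mul]
    rw [hlin]
    apply Finset.sum_equiv (Equiv.mulLeft h)
    · intro g
      simp only [hmemT, Equiv.coe_mulLeft]
      constructor
      · intro hgS; exact hmul h hh g hgS
      · intro hhg
        have := hmul _ (hinvm h hh) _ hhg
        simpa [← mul_assoc] using this
    · intro g _
      rfl
  -- v is fixed by S
  have hvmem : v ∈ fixedSpace S := fun g hg => hg.2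
  -- L w ≠ 0
  have hLu0 : L u0 = MvPolynomial.eval v (pderiv i0 f) := by
    rw [hLdef]
    simp [hu0, Pi.single_apply]
  have hLw : L w = (T.card : ℂ) * MvPolynomial.eval v (pderiv i0 f) := by
    rw [hLdef]
    simp only [hwdef, Finset.sum_apply, Finset.sum_mul]
    rw [Finset.sum_comm]
    have : ∀ g ∈ T, ∑ i, ((g : Matrix (Fin n) (Fin n) ℂ).mulVec u0) i
          * MvPolynomial.eval v (pderiv i f) = MvPolynomial.eval v (pderiv i0 f) := by
      intro g hg
      have hk := key g ((hmemT g).mp hg) u0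
      simp only [hLdef] at hk
      rw [hk]
      simp [hu0, Pi.single_apply]
    rw [Finset.sum_congr rfl this, Finset.sum_const, nsmul_eq_mul]
  have hTcard : T.card ≠ 0 := Finset.card_ne_zero_of_mem ((hmemT 1).mpr hone)
  have hLwne : L w ≠ 0 := by
    rw [hLw]
    exact mul_ne_zero (by exact_mod_cast hTcard) hi0
  -- linear independence of v and w inside the fixed space
  have hli : LinearIndependent ℂ
      ![(⟨v, hvmem⟩ : fixedSpace S), (⟨w, hwmem⟩ : fixedSpace S)] := by
    rw [LinearIndependent.pair_iff]
    intro s t hst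
    have hamb : s • v + t • w = 0 := by
      have := congrArg (Subtype.val) hst
      simpa using this
    have hLlin : L (s • v + t • w) = s * L v + t * L w := by
      rw [hLdef]
      simp only [Pi.add_apply, Pi.smul_apply, smul_eq_mul, add_mul, Finset.sum_add_distrib,
        Finset.mul_sum]
      congr 1
      · apply Finset.sum_congr rfl; intro i _; ring
      · apply Finset.sum_congr rfl; intro i _; ring
    have hL0 : L 0 = 0 := by rw [hLdef]; simp
    have ht : t = 0 := by
      have : s * L v + t * L w = 0 := by rw [← hLlin, hamb, hL0]
      rw [hLv, mul_zero, zero_add] at this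
      exact (mul_eq_zero.mp this).resolve_right hLwne
    have hs : s = 0 := by
      rw [ht, zero_smul, add_zero] at hamb
      rcases smul_eq_zero.mp hamb with h | h
      · exact h
      · exact absurd h hv0
    exact ⟨hs, ht⟩
  have := hli.fintype_card_le_finrank
  simpa using this
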